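/- Let A = ⊕_{k≥0} A^k be a nonnegatively graded Lie algebra whose bracket has weight −2 (i.e. [A^i, A^j] ⊆ A^{i+j−2}, with A^n := 0 for n < 0), and let P : A → A be the projection onto A⁰ ⊕ A¹. Then for all f, g ∈ A: P[f,g] + [Pf, Pg] = P[Pf, g] + P[f, Pg]. -/

import Mathlib

/-- For a nonnegatively graded Lie algebra whose bracket has weight `-2`, the
projection `P` onto the weight `0` and weight `1` components satisfies the
distributivity law `P[f,g] + [Pf,Pg] = P[Pf,g] + P[f,Pg]`. -/
theorem projector_distributivity {R M : Type*} [CommRing R] [AddCommGroup M]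
    [Module R M]
    (G : ℕ → Submodule R M) (hG : DirectSum.IsInternal G)
    (bracket : M →ₗ[R] M →ₗ[R] M)
    (hweight : ∀ (i j : ℕ) (x y : M), x ∈ G i → y ∈ G j →
      if 2 ≤ i + j then bracket x y ∈ G (i + j - 2) else bracket x y = 0)
    (hskew : ∀ x : M, bracket x x = 0)
    (hjacobi : ∀ x y z : M, bracket x (bracket y z) =
      bracket (bracket x y) z + bracket y (bracket x z))
    (P : M →ₗ[R] M)
    (hP : ∀ (k : ℕ) (x : M), x ∈ G k → P x = if k ≤ 1 then x else 0)
    (f g : M) :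
    P (bracket f g) + bracket (P f) (P g) =
      P (bracket (P f) g) + P (bracket f (P g)) := by
  have hf : f ∈ ⨆ i, G i := by
    rw [hG.submodule_iSup_eq_top]; exact Submodule.mem_top
  have hg : g ∈ ⨆ i, G i := by
    rw [hG.submodule_iSup_eq_top]; exact Submodule.mem_top
  refine Submodule.iSup_induction (x := f) G hf
    (motive := fun a => ∀ b ∈ ⨆ i, G i, P (bracket a b) + bracket (P a) (P b) =
      P (bracket (P a) b) + P (bracket a (P b))) ?_ ?_ ?_ g hg
  · intro i x hx b hb
    refine Submodule.iSup_induction (x := b) G hb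
      (motive := fun b => P (bracket x b) + bracket (P x) (P b) =
        P (bracket (P x) b) + P (bracket x (P b))) ?_ ?_ ?_
    · intro j y hy
      have hPx := hP i x hx
      have hPy := hP j y hy
      have hbr := hweight i j x y hx hy
      by_cases hi : i ≤ 1 <;> by_cases hj : j ≤ 1 <;>
        simp only [hi, hj, if_true, if_false] at hPx hPy
      · rw [hPx, hPy]
        have : P (bracket x y) = bracket x y := by
          by_cases h2 : 2 ≤ i + j
          · rw [if_pos h2] at hbr
            rw [hP (i + j - 2) _ hbr, if_pos (by omega)]
          · rw [if_neg h2] at hbr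
            rw [hbr, map_zero]
        rw [this]
      · rw [hPx, hPy]; simp
      · rw [hPx, hPy]; simp
      · rw [hPx, hPy]
        have h2 : 2 ≤ i + j := by omega
        rw [if_pos h2] at hbr
        have : P (bracket x y) = 0 := by
          rw [hP (i + j - 2) _ hbr, if_neg (by omega)]
        simp [this]
    · simp
    · intro a b ha hb
      simp only [map_add, LinearMap.add_apply]
      calc P (bracket x a) + P (bracket x b) + (bracket (P x) (P a) + bracket (P x) (P b))
          = (P (bracket x a) + bracket (P x) (P a)) + (P (bracket x b) + bracket (P x) (P b)) := by
            abel
        _ = (P (bracket (P x) a) + P (bracket x (P a)))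
              + (P (bracket (P x) b) + P (bracket x (P b))) := by rw [ha, hb]
        _ = P (bracket (P x) a) + P (bracket (P x) b)
              + (P (bracket x (P a)) + P (bracket x (P b))) := by abel
  · intro b _; simp
  · intro x y hx hy b hb
    have h1 := hx b hb
    have h2 := hy b hb
    simp only [map_add, LinearMap.add_apply]
    calc P (bracket x b) + P (bracket y b) + (bracket (P x) (P b) + bracket (P y) (P b))
        = (P (bracket x b) + bracket (P x) (P b)) + (P (bracket y b) + bracket (P y) (P b)) := by
          abel
      _ = (P (bracket (P x) b) + P (bracket x (P b)))
            + (P (bracket (P y) b) + P (bracket y (P b))) := by rw [h1, h2]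
      _ = P (bracket (P x) b) + P (bracket (P y) b)
            + (P (bracket x (P b)) + P (bracket y (P b))) := by abel
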